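/- The operator (Z₁)²(Z_{1̄})² acts on each spherical harmonic space H_{p,q} by the scalar (p+1)(p+2)(q−1)q; in particular it vanishes on H_{p,0} and H_{p,1} and is injective on H_{p,q} for q ≥ 2. -/

import Mathlib

open MvPolynomial

lemma my_pderiv_comm (i j : Fin 4) (f : MvPolynomial (Fin 4) ℂ) :
    pderiv i (pderiv j f) = pderiv j (pderiv i f) := by
  induction f using MvPolynomial.induction_on with
  | C a => simp
  | add f g hf hg => simp [hf, hg]
  | mul_X f k hf =>
    rcases eq_or_ne k j with rfl | hkj <;> rcases eq_or_ne k i with rfl | hki <;>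
      simp [pderiv_mul, hf, pderiv_X_self, pderiv_X_of_ne, *] <;> ring

lemma euler_mono (w : Fin 4 → ℕ) (d : Fin 4 →₀ ℕ) (c : ℂ) :
    ∑ i : Fin 4, C (w i : ℂ) * (X i * pderiv i (monomial d c)) =
      C ((Finsupp.weight w d : ℕ) : ℂ) * monomial d c := by
  have key : ∀ i : Fin 4, X i * pderiv i (monomial d c) = monomial d (c * (d i : ℂ)) := by
    intro i
    rw [pderiv_monomial, X, monomial_mul, one_mul]
    rcases Nat.eq_zero_or_pos (d i) with h | h
    · simp [h]
    · congr 1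
      rw [add_tsub_cancel_of_le]
      rwa [Finsupp.single_le_iff]
  have hw : ((Finsupp.weight w d : ℕ) : ℂ) = ∑ i : Fin 4, (w i : ℂ) * (d i : ℂ) := by
    rw [Finsupp.weight_apply, Finsupp.sum_fintype]
    · push_cast
      simp [mul_comm]
    · intro i; simp
  simp only [key, C_mul_monomial, hw]
  rw [← Finset.sum_congr rfl (fun i _ => rfl), ← map_sum (monomial d)]
  congr 1
  rw [Finset.sum_mul]
  exact Finset.sum_congr rfl fun i _ => by ring

lemma euler {w : Fin 4 → ℕ} {n : ℕ} {u : MvPolynomial (Fin 4) ℂ}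
    (h : u.IsWeightedHomogeneous w n) :
    ∑ i : Fin 4, C (w i : ℂ) * (X i * pderiv i u) = C (n : ℂ) * u := by
  have hu := (MvPolynomial.as_sum u).symm
  calc ∑ i : Fin 4, C (w i : ℂ) * (X i * pderiv i u)
      = ∑ i : Fin 4, C (w i : ℂ) * (X i * pderiv i (∑ d ∈ u.support, monomial d (coeff d u))) := by
        rw [hu]
    _ = ∑ d ∈ u.support, ∑ i : Fin 4, C (w i : ℂ) * (X i * pderiv i (monomial d (coeff d u))) := by
        simp only [map_sum, Finset.mul_sum]
        rw [Finset.sum_comm]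
    _ = ∑ d ∈ u.support, C (n : ℂ) * monomial d (coeff d u) := by
        refine Finset.sum_congr rfl fun d hd => ?_
        rw [euler_mono, h (mem_support_iff.mp hd)]
    _ = C (n : ℂ) * u := by rw [← Finset.mul_sum, hu]

section ops

lemma stepE (v : MvPolynomial (Fin 4) ℂ) (a : ℂ)
    (hE : X 0 * pderiv 0 v + X 1 * pderiv 1 v = C a * v) :
    X 0 * pderiv 0 (X 1 * pderiv 2 v - X 0 * pderiv 3 v)
      + X 1 * pderiv 1 (X 1 * pderiv 2 v - X 0 * pderiv 3 v)
      = C (a+1) * (X 1 * pderiv 2 v - X 0 * pderiv 3 v) := by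
  have h2 := congrArg (pderiv 2) hE
  have h3 := congrArg (pderiv 3) hE
  simp only [pderiv_mul, map_add, map_sub, pderiv_C_mul, pderiv_X_self,
    pderiv_X_of_ne (by decide : (1:Fin 4) ≠ 0), pderiv_X_of_ne (by decide : (0:Fin 4) ≠ 1),
    pderiv_X_of_ne (by decide : (0:Fin 4) ≠ 2), pderiv_X_of_ne (by decide : (0:Fin 4) ≠ 3),
    pderiv_X_of_ne (by decide : (1:Fin 4) ≠ 2), pderiv_X_of_ne (by decide : (1:Fin 4) ≠ 3),
    pderiv_X_of_ne (by decide : (2:Fin 4) ≠ 0), pderiv_X_of_ne (by decide : (2:Fin 4) ≠ 1),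
    pderiv_X_of_ne (by decide : (3:Fin 4) ≠ 0), pderiv_X_of_ne (by decide : (3:Fin 4) ≠ 1),
    pderiv_X_of_ne (by decide : (2:Fin 4) ≠ 3), pderiv_X_of_ne (by decide : (3:Fin 4) ≠ 2),
    zero_mul, mul_zero, add_zero, zero_add, one_mul, mul_one, pderiv_C, C_1,
    my_pderiv_comm] at h2 h3 ⊢
  linear_combination X 1 * h2 - X 0 * h3

lemma stepB (v : MvPolynomial (Fin 4) ℂ) (b : ℂ)
    (hB : X 2 * pderiv 2 v + X 3 * pderiv 3 v = C b * v) :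
    X 2 * pderiv 2 (X 1 * pderiv 2 v - X 0 * pderiv 3 v)
      + X 3 * pderiv 3 (X 1 * pderiv 2 v - X 0 * pderiv 3 v)
      = C (b-1) * (X 1 * pderiv 2 v - X 0 * pderiv 3 v) := by
  have h2 := congrArg (pderiv 2) hB
  have h3 := congrArg (pderiv 3) hB
  simp only [pderiv_mul, map_add, map_sub, pderiv_C_mul, pderiv_X_self,
    pderiv_X_of_ne (by decide : (1:Fin 4) ≠ 0), pderiv_X_of_ne (by decide : (0:Fin 4) ≠ 1),
    pderiv_X_of_ne (by decide : (0:Fin 4) ≠ 2), pderiv_X_of_ne (by decide : (0:Fin 4) ≠ 3),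
    pderiv_X_of_ne (by decide : (1:Fin 4) ≠ 2), pderiv_X_of_ne (by decide : (1:Fin 4) ≠ 3),
    pderiv_X_of_ne (by decide : (2:Fin 4) ≠ 0), pderiv_X_of_ne (by decide : (2:Fin 4) ≠ 1),
    pderiv_X_of_ne (by decide : (3:Fin 4) ≠ 0), pderiv_X_of_ne (by decide : (3:Fin 4) ≠ 1),
    pderiv_X_of_ne (by decide : (2:Fin 4) ≠ 3), pderiv_X_of_ne (by decide : (3:Fin 4) ≠ 2),
    zero_mul, mul_zero, add_zero, zero_add, one_mul, mul_one, pderiv_C, C_1,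
    my_pderiv_comm] at h2 h3 ⊢
  linear_combination X 1 * h2 - X 0 * h3

lemma stepL (v : MvPolynomial (Fin 4) ℂ)
    (hL : pderiv 2 (pderiv 0 v) + pderiv 3 (pderiv 1 v) = 0) :
    pderiv 2 (pderiv 0 (X 1 * pderiv 2 v - X 0 * pderiv 3 v))
      + pderiv 3 (pderiv 1 (X 1 * pderiv 2 v - X 0 * pderiv 3 v)) = 0 := by
  have h2 := congrArg (pderiv 2) hL
  have h3 := congrArg (pderiv 3) hL
  simp only [pderiv_mul, map_add, map_sub, map_zero, pderiv_C_mul, pderiv_X_self,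
    pderiv_X_of_ne (by decide : (1:Fin 4) ≠ 0), pderiv_X_of_ne (by decide : (0:Fin 4) ≠ 1),
    pderiv_X_of_ne (by decide : (0:Fin 4) ≠ 2), pderiv_X_of_ne (by decide : (0:Fin 4) ≠ 3),
    pderiv_X_of_ne (by decide : (1:Fin 4) ≠ 2), pderiv_X_of_ne (by decide : (1:Fin 4) ≠ 3),
    pderiv_X_of_ne (by decide : (2:Fin 4) ≠ 0), pderiv_X_of_ne (by decide : (2:Fin 4) ≠ 1),
    pderiv_X_of_ne (by decide : (3:Fin 4) ≠ 0), pderiv_X_of_ne (by decide : (3:Fin 4) ≠ 1),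
    pderiv_X_of_ne (by decide : (2:Fin 4) ≠ 3), pderiv_X_of_ne (by decide : (3:Fin 4) ≠ 2),
    zero_mul, mul_zero, add_zero, zero_add, one_mul, mul_one, pderiv_C, C_1,
    my_pderiv_comm] at h2 h3 ⊢
  linear_combination X 1 * h2 - X 0 * h3

lemma keyZZ (v : MvPolynomial (Fin 4) ℂ) (a b : ℂ)
    (hL : pderiv 2 (pderiv 0 v) + pderiv 3 (pderiv 1 v) = 0)
    (hE : X 0 * pderiv 0 v + X 1 * pderiv 1 v = C a * v)
    (hB : X 2 * pderiv 2 v + X 3 * pderiv 3 v = C b * v) :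
    X 3 * pderiv 0 (X 1 * pderiv 2 v - X 0 * pderiv 3 v)
      - X 2 * pderiv 1 (X 1 * pderiv 2 v - X 0 * pderiv 3 v)
      = C (-((a+1)*b)) * v := by
  have h0 := congrArg (pderiv 0) hB
  have h1 := congrArg (pderiv 1) hB
  simp only [pderiv_mul, map_add, map_sub, pderiv_C_mul, pderiv_X_self,
    pderiv_X_of_ne (by decide : (1:Fin 4) ≠ 0), pderiv_X_of_ne (by decide : (0:Fin 4) ≠ 1),
    pderiv_X_of_ne (by decide : (0:Fin 4) ≠ 2), pderiv_X_of_ne (by decide : (0:Fin 4) ≠ 3),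
    pderiv_X_of_ne (by decide : (1:Fin 4) ≠ 2), pderiv_X_of_ne (by decide : (1:Fin 4) ≠ 3),
    pderiv_X_of_ne (by decide : (2:Fin 4) ≠ 0), pderiv_X_of_ne (by decide : (2:Fin 4) ≠ 1),
    pderiv_X_of_ne (by decide : (3:Fin 4) ≠ 0), pderiv_X_of_ne (by decide : (3:Fin 4) ≠ 1),
    pderiv_X_of_ne (by decide : (2:Fin 4) ≠ 3), pderiv_X_of_ne (by decide : (3:Fin 4) ≠ 2),
    zero_mul, mul_zero, add_zero, zero_add, one_mul, mul_one, pderiv_C, C_1,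
    C_neg, C_mul, C_add, my_pderiv_comm] at h0 h1 hL ⊢
  linear_combination (X 0 * X 2 + X 1 * X 3) * hL - X 0 * h0 - X 1 * h1 - C b * hE - hB

lemma Z1_C_mul (c : ℂ) (w : MvPolynomial (Fin 4) ℂ) :
    X 3 * pderiv 0 (C c * w) - X 2 * pderiv 1 (C c * w)
      = C c * (X 3 * pderiv 0 w - X 2 * pderiv 1 w) := by
  simp only [pderiv_C_mul]; ring

end ops

/-- `(Z₁)²(Z_{1̄})²` acts on a harmonic polynomial of bidegree `(p,q)` by the
scalar `(p+1)(p+2)(q−1)q` modulo the ideal of the unit sphere; in particular it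
vanishes (mod the ideal) when `q ≤ 1`, and is injective on `H_{p,q}` for `q ≥ 2`.
Here `z = X 0`, `w = X 1`, `z̄ = X 2`, `w̄ = X 3`, `Z₁ = w̄∂_z − z̄∂_w`,
`Z_{1̄} = w∂_{z̄} − z∂_{w̄}`. -/
theorem stmt13 :
    letI Z1 : MvPolynomial (Fin 4) ℂ → MvPolynomial (Fin 4) ℂ :=
      fun v => X 3 * pderiv 0 v - X 2 * pderiv 1 v
    letI Z1b : MvPolynomial (Fin 4) ℂ → MvPolynomial (Fin 4) ℂ :=
      fun v => X 1 * pderiv 2 v - X 0 * pderiv 3 v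
    letI sph : Ideal (MvPolynomial (Fin 4) ℂ) :=
      Ideal.span {(X 0 * X 2 + X 1 * X 3 - 1 : MvPolynomial (Fin 4) ℂ)}
    ∀ (p q : ℕ) (u : MvPolynomial (Fin 4) ℂ),
      u.IsWeightedHomogeneous ![1, 1, 0, 0] p →
      u.IsWeightedHomogeneous ![0, 0, 1, 1] q →
      pderiv 2 (pderiv 0 u) + pderiv 3 (pderiv 1 u) = 0 →
      (Z1 (Z1 (Z1b (Z1b u)))
          - C ((((p:ℂ)+1) * ((p:ℂ)+2) * ((q:ℂ)-1) * (q:ℂ))) * u ∈ sph) ∧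
      (q ≤ 1 → Z1 (Z1 (Z1b (Z1b u))) ∈ sph) ∧
      (2 ≤ q → Z1 (Z1 (Z1b (Z1b u))) ∈ sph → u ∈ sph) := by
  intro p q u hp hq hL
  beta_reduce
  have hE : X 0 * pderiv 0 u + X 1 * pderiv 1 u = C (p:ℂ) * u := by
    have := euler hp
    simpa [Fin.sum_univ_four] using this
  have hB : X 2 * pderiv 2 u + X 3 * pderiv 3 u = C (q:ℂ) * u := by
    have := euler hq
    simpa [Fin.sum_univ_four] using this
  set u1 : MvPolynomial (Fin 4) ℂ := X 1 * pderiv 2 u - X 0 * pderiv 3 u with hu1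
  have hE1 := stepE u (p:ℂ) hE
  have hB1 := stepB u (q:ℂ) hB
  have hL1 := stepL u hL
  rw [← hu1] at hE1 hB1 hL1
  have key1 := keyZZ u1 ((p:ℂ)+1) ((q:ℂ)-1) hL1 hE1 hB1
  have key0 := keyZZ u (p:ℂ) (q:ℂ) hL hE hB
  have hfinal :
      X 3 * pderiv 0 (X 3 * pderiv 0 (X 1 * pderiv 2 u1 - X 0 * pderiv 3 u1)
          - X 2 * pderiv 1 (X 1 * pderiv 2 u1 - X 0 * pderiv 3 u1))
        - X 2 * pderiv 1 (X 3 * pderiv 0 (X 1 * pderiv 2 u1 - X 0 * pderiv 3 u1)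
          - X 2 * pderiv 1 (X 1 * pderiv 2 u1 - X 0 * pderiv 3 u1))
        = C (((p:ℂ)+1) * ((p:ℂ)+2) * ((q:ℂ)-1) * (q:ℂ)) * u := by
    rw [key1, Z1_C_mul, key0, ← mul_assoc, ← C_mul]
    ring_nf
  refine ⟨?_, ?_, ?_⟩
  · rw [hfinal, sub_self]
    exact Ideal.zero_mem _
  · intro hq1
    rw [hfinal]
    interval_cases q <;> norm_num
  · intro hq2 hmem
    rw [hfinal] at hmem
    have hc : (((p:ℂ)+1) * ((p:ℂ)+2) * ((q:ℂ)-1) * (q:ℂ)) ≠ 0 := by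
      have h1 : ((p:ℂ)+1) ≠ 0 := by
        have : ((p+1 : ℕ) : ℂ) ≠ 0 := Nat.cast_ne_zero.mpr (by omega)
        push_cast at this; exact this
      have h2 : ((p:ℂ)+2) ≠ 0 := by
        have : ((p+2 : ℕ) : ℂ) ≠ 0 := Nat.cast_ne_zero.mpr (by omega)
        push_cast at this; exact this
      have h3 : ((q:ℂ)-1) ≠ 0 := by
        have : (q:ℂ) ≠ 1 := by
          exact_mod_cast (by omega : q ≠ 1)
        exact sub_ne_zero.mpr this
      have h4 : (q:ℂ) ≠ 0 := Nat.cast_ne_zero.mpr (by omega)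
      exact mul_ne_zero (mul_ne_zero (mul_ne_zero h1 h2) h3) h4
    have := Ideal.mul_mem_left _ (C ((((p:ℂ)+1) * ((p:ℂ)+2) * ((q:ℂ)-1) * (q:ℂ)))⁻¹) hmem
    rwa [← mul_assoc, ← C_mul, inv_mul_cancel₀ hc, C_1, one_mul] at this
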